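/- Let μ: [0,1] → ℝ be continuous with μ(x) = c(2x-1) for some constant c > 0 (so μ' = 2c > 0), and let h: [0,1] → ℝ be continuous with h(x) < 0 for all x ∈ (0,1). Suppose g ∈ C²([0,1]) satisfies (1/2)g'' - μg' - μ'g = h on (0,1), g(0) = g(1), and ∫₀¹ g(x)dx = 0. Then g(1) < 0. -/

import Mathlib

/-- Maximum-principle argument of Proposition 4: with μ(x) = c(2x-1), c > 0,
h < 0 on (0,1), any C² solution g of (1/2)g'' - μ g' - μ' g = h with
g(0) = g(1) and ∫₀¹ g = 0 satisfies g(1) < 0. -/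
theorem stmt4 (c : ℝ) (hc : 0 < c) (μ h g g' g'' : ℝ → ℝ)
    (hμ : ∀ x, μ x = c * (2*x - 1))
    (hh : ContinuousOn h (Set.Icc 0 1)) (hhneg : ∀ x ∈ Set.Ioo (0:ℝ) 1, h x < 0)
    (hg : ContinuousOn g (Set.Icc 0 1)) (hg'c : ContinuousOn g' (Set.Icc 0 1))
    (hg''c : ContinuousOn g'' (Set.Icc 0 1))
    (hd1 : ∀ x ∈ Set.Ioo (0:ℝ) 1, HasDerivAt g (g' x) x)
    (hd2 : ∀ x ∈ Set.Ioo (0:ℝ) 1, HasDerivAt g' (g'' x) x)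
    (hode : ∀ x ∈ Set.Ioo (0:ℝ) 1, (1/2) * g'' x - μ x * g' x - (2*c) * g x = h x)
    (hbc : g 0 = g 1)
    (hint : (∫ x in (0:ℝ)..1, g x) = 0) :
    g 1 < 0 := by
  by_contra hge
  push_neg at hge
  -- F = (1/2) g' - μ g, the "flux"; F' = h < 0 on (0,1), so F is strictly decreasing.
  set F : ℝ → ℝ := fun y => (1/2) * g' y - c * (2*y - 1) * g y with hF
  have hFd : ∀ x ∈ Set.Ioo (0:ℝ) 1, HasDerivAt F (h x) x := by
    intro x hx
    have h1 : HasDerivAt (fun y => (1/2 : ℝ) * g' y) ((1/2) * g'' x) x :=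
      (hd2 x hx).const_mul _
    have hlin : HasDerivAt (fun y : ℝ => c * (2*y - 1)) (c * 2) x := by
      have : HasDerivAt (fun y : ℝ => 2*y - 1) 2 x := by
        simpa using ((hasDerivAt_id x).const_mul (2:ℝ)).sub_const 1
      simpa using this.const_mul c
    have h2 : HasDerivAt (fun y => c * (2*y - 1) * g y)
        ((c * 2) * g x + (c * (2*x - 1)) * g' x) x := hlin.mul (hd1 x hx)
    have := h1.sub h2
    have heq : (1/2) * g'' x - ((c * 2) * g x + (c * (2*x - 1)) * g' x) = h x := by
      have := hode x hx
      rw [hμ x] at this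
      linarith
    rw [heq] at this
    exact this
  have hFc : ContinuousOn F (Set.Icc 0 1) := by
    apply ContinuousOn.sub (hg'c.const_smul (1/2 : ℝ))
    exact (continuous_const.mul ((continuous_const.mul continuous_id).sub
      continuous_const)).continuousOn.mul hg
  have hFanti : StrictAntiOn F (Set.Icc 0 1) := by
    apply strictAntiOn_of_deriv_neg (convex_Icc 0 1) hFc
    intro x hx
    rw [interior_Icc] at hx
    rw [(hFd x hx).deriv]
    exact hhneg x hx
  -- φ = exp(2c(x - x²)) integrating factor, G = g φ, G' = 2 F φ.
  set φ : ℝ → ℝ := fun y => Real.exp (2*c*(y - y^2)) with hφ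
  have hφpos : ∀ y, 0 < φ y := fun y => Real.exp_pos _
  have hφd : ∀ x : ℝ, HasDerivAt φ ((2*c*(1 - 2*x)) * φ x) x := by
    intro x
    have hinner : HasDerivAt (fun y : ℝ => 2*c*(y - y^2)) (2*c*(1 - 2*x)) x := by
      have h1 : HasDerivAt (fun y : ℝ => y - y^2) (1 - 2*x) x := by
        exact ((hasDerivAt_id' x).fun_sub (hasDerivAt_pow 2 x)).congr_deriv (by norm_num)
      exact h1.const_mul (2*c)
    rw [mul_comm]
    exact hinner.exp
  set G : ℝ → ℝ := fun y => g y * φ y with hG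
  have hGc : ContinuousOn G (Set.Icc 0 1) :=
    hg.mul (Real.continuous_exp.comp (by fun_prop)).continuousOn
  have hGd : ∀ x ∈ Set.Ioo (0:ℝ) 1, HasDerivAt G (2 * F x * φ x) x := by
    intro x hx
    have := (hd1 x hx).mul (hφd x)
    have heq : g' x * φ x + g x * ((2*c*(1 - 2*x)) * φ x) = 2 * F x * φ x := by
      rw [hF]; ring
    rw [heq] at this
    exact this
  have hG0 : G 0 = g 0 := by simp [hG, hφ]
  have hG1 : G 1 = g 1 := by norm_num [hG, hφ]
  -- g > 0 on (0,1)
  have hgpos : ∀ x ∈ Set.Ioo (0:ℝ) 1, 0 < g x := by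
    intro x hx
    obtain ⟨hx0, hx1⟩ := hx
    have hkey : 0 < G x := by
      rcases le_or_gt 0 (F x) with hFx | hFx
      · -- F > 0 to the left of x, so G strictly increasing on [0, x]
        have hmono : StrictMonoOn G (Set.Icc 0 x) := by
          apply strictMonoOn_of_deriv_pos (convex_Icc 0 x)
            (hGc.mono (Set.Icc_subset_Icc le_rfl hx1.le))
          intro y hy
          rw [interior_Icc] at hy
          have hy01 : y ∈ Set.Ioo (0:ℝ) 1 := ⟨hy.1, hy.2.trans hx1⟩
          rw [(hGd y hy01).deriv]
          have hFy : 0 < F y := lt_of_le_of_lt hFx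
            (hFanti ⟨hy.1.le, (hy.2.trans hx1).le⟩ ⟨hx0.le, hx1.le⟩ hy.2)
          positivity
        have := hmono (Set.left_mem_Icc.2 hx0.le) (Set.right_mem_Icc.2 hx0.le) hx0
        rw [hG0] at this
        have : (0:ℝ) ≤ g 0 := hbc ▸ hge
        calc (0:ℝ) ≤ g 0 := this
          _ = G 0 := hG0.symm
          _ < G x := hmono (Set.left_mem_Icc.2 hx0.le) (Set.right_mem_Icc.2 hx0.le) hx0
      · -- F < 0 to the right of x, so G strictly decreasing on [x, 1]
        have hanti : StrictAntiOn G (Set.Icc x 1) := by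
          apply strictAntiOn_of_deriv_neg (convex_Icc x 1)
            (hGc.mono (Set.Icc_subset_Icc hx0.le le_rfl))
          intro y hy
          rw [interior_Icc] at hy
          have hy01 : y ∈ Set.Ioo (0:ℝ) 1 := ⟨hx0.trans hy.1, hy.2⟩
          rw [(hGd y hy01).deriv]
          have hFy : F y < 0 := lt_trans
            (hFanti ⟨hx0.le, hx1.le⟩ ⟨(hx0.trans hy.1).le, hy.2.le⟩ hy.1) hFx
          have := hφpos y
          nlinarith
        calc (0:ℝ) ≤ g 1 := hge
          _ = G 1 := hG1.symm
          _ < G x := hanti (Set.left_mem_Icc.2 hx1.le) (Set.right_mem_Icc.2 hx1.le) hx1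
    have hφx := hφpos x
    by_contra hgx
    push_neg at hgx
    have hkey' : 0 < g x * φ x := hkey
    nlinarith [mul_nonpos_of_nonpos_of_nonneg hgx hφx.le]
  -- hence the integral is positive, contradiction
  have hgi : IntervalIntegrable g MeasureTheory.volume 0 1 := by
    apply ContinuousOn.intervalIntegrable
    rwa [Set.uIcc_of_le (by norm_num : (0:ℝ) ≤ 1)]
  have := intervalIntegral.intervalIntegral_pos_of_pos_on hgi hgpos (by norm_num)
  rw [hint] at this
  exact lt_irrefl 0 this
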